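/- For every real x > 0, −∑_{k=1}^∞ ψ(4k) x^k / Γ(4k) = (x^{1/4}/8) · { 4 sinh(x^{1/4}) Chi(x^{1/4}) + sin(x^{1/4}) [ln x − 4 Ci(x^{1/4})] − 4 cosh(x^{1/4}) Shi(x^{1/4}) + 4 cos(x^{1/4}) Si(x^{1/4}) − sinh(x^{1/4}) ln x }. (This is the value (2.11) of the derivative of the integral Mittag-Leffler function with respect to α at α = 4, β = 0.) -/

import Mathlib

open scoped BigOperators

/-- The digamma function `ψ(x) = Γ'(x)/Γ(x)`. -/
noncomputable def digamma (x : ℝ) : ℝ := deriv Real.Gamma x / Real.Gamma x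

/-- The sine integral `Si(y) = ∫₀^y sin t / t dt`. -/
noncomputable def Si (y : ℝ) : ℝ := ∫ t in (0 : ℝ)..y, Real.sin t / t

/-- The cosine integral `Ci(y) = γ + ln y − ∫₀^y (1 − cos t)/t dt`. -/
noncomputable def Ci (y : ℝ) : ℝ :=
  Real.eulerMascheroniConstant + Real.log y - ∫ t in (0 : ℝ)..y, (1 - Real.cos t) / t

/-- The hyperbolic sine integral `Shi(y) = ∫₀^y sinh t / t dt`. -/
noncomputable def Shi (y : ℝ) : ℝ := ∫ t in (0 : ℝ)..y, Real.sinh t / t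

/-- The hyperbolic cosine integral `Chi(y) = γ + ln y − ∫₀^y (1 − cosh t)/t dt`. -/
noncomputable def Chi (y : ℝ) : ℝ :=
  Real.eulerMascheroniConstant + Real.log y - ∫ t in (0 : ℝ)..y, (1 - Real.cosh t) / t

open Complex (I)
open MeasureTheory intervalIntegral

lemma hasSum_quarter (y : ℝ) :
    HasSum (fun k : ℕ => y ^ (4 * k + 3) / (Nat.factorial (4 * k + 3) : ℝ))
      ((Real.sinh y - Real.sin y) / 2) := by
  have H : ∀ z : ℂ, HasSum (fun n : ℕ => z ^ n / (n.factorial : ℂ)) (Complex.exp z) := by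
    intro z
    rw [Complex.exp_eq_exp_ℂ]
    exact NormedSpace.expSeries_div_hasSum_exp z
  set z : ℂ := (y : ℂ) with hz
  have h := ((((H z).sub (H (-z))).add (((H (I * z)).sub (H (-(I * z)))).mul_left I)).div_const 4)
  have hsum : Complex.exp z - Complex.exp (-z) +
      I * (Complex.exp (I * z) - Complex.exp (-(I * z))) = 4 * ((Complex.sinh z - Complex.sin z) / 2) := by
    rw [Complex.sinh, Complex.sin, mul_comm z I]
    ring
  rw [hsum, mul_div_cancel_left₀ _ (by norm_num : (4:ℂ) ≠ 0)] at h
  have key : ∀ n : ℕ, (z ^ n / n.factorial - (-z) ^ n / n.factorial +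
      I * ((I * z) ^ n / n.factorial - (-(I * z)) ^ n / n.factorial)) / 4 =
      (if n % 4 = 3 then z ^ n / (n.factorial : ℂ) else 0) := by
    intro n
    have hI4 : (I : ℂ) ^ 4 = 1 := by
      norm_num [show (4:ℕ) = 2*2 from rfl, pow_mul, Complex.I_sq]
    have hIn : (I : ℂ) ^ n = I ^ (n % 4) := by
      conv_lhs => rw [← Nat.div_add_mod n 4, pow_add, pow_mul, hI4, one_pow, one_mul]
    have hNn : ((-1 : ℂ)) ^ n = (-1) ^ (n % 4) := by
      conv_lhs => rw [← Nat.div_add_mod n 4, pow_add, pow_mul]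
      norm_num
    have e1 : ((-z) ^ n : ℂ) = (-1) ^ n * z ^ n := by rw [neg_pow]
    have e2 : ((I * z) ^ n : ℂ) = I ^ n * z ^ n := mul_pow _ _ _
    have e3 : ((-(I * z)) ^ n : ℂ) = (-1) ^ n * (I ^ n * z ^ n) := by rw [neg_pow, mul_pow]
    rw [e1, e2, e3, hIn, hNn]
    have : n % 4 = 0 ∨ n % 4 = 1 ∨ n % 4 = 2 ∨ n % 4 = 3 := by omega
    have hI2 : (I : ℂ) ^ 2 = -1 := Complex.I_sq
    have hI3 : (I : ℂ) ^ 3 = -I := by rw [pow_succ, hI2]; ring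
    rcases this with h | h | h | h <;> rw [h]
    · rw [if_neg (by norm_num)]; ring
    · rw [if_neg (by norm_num)]
      linear_combination (z ^ n / (n.factorial : ℂ) / 2) * hI2
    · rw [if_neg (by norm_num)]; ring
    · rw [if_pos rfl, hI3]
      linear_combination (-(z ^ n / (n.factorial : ℂ)) / 2) * hI2
  rw [funext key] at h
  have hinj : Function.Injective (fun k : ℕ => 4 * k + 3) := fun a b hab => by dsimp only at hab; omega
  have hsupp : ∀ n ∉ Set.range (fun k : ℕ => 4 * k + 3),
      (if n % 4 = 3 then z ^ n / (n.factorial : ℂ) else 0) = 0 := by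
    intro n hn
    rw [if_neg]
    intro hmod
    exact hn ⟨n / 4, by dsimp only; omega⟩
  have h2 := (hinj.hasSum_iff hsupp).mpr h
  have h3 : HasSum (fun k : ℕ => ((y ^ (4 * k + 3) / ((4 * k + 3).factorial : ℝ) : ℝ) : ℂ))
      (((Real.sinh y - Real.sin y) / 2 : ℝ) : ℂ) := by
    convert h2 using 2 with k
    · simp only [Function.comp]
      rw [if_pos (by omega : (4 * k + 3) % 4 = 3)]
      push_cast [hz]
      ring
    · push_cast [hz, Complex.ofReal_sinh, Complex.ofReal_sin]
      ring
  exact Complex.hasSum_ofReal.mp h3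


lemma sinh_le_mul_exp {t : ℝ} (ht : 0 ≤ t) : Real.sinh t ≤ t * Real.exp t := by
  have h1 := Real.add_one_le_exp (-(2*t))
  have h2 : Real.exp (-(2*t)) = Real.exp (-t) * Real.exp (-t) := by
    rw [← Real.exp_add]; ring_nf
  have h3 : Real.exp t * Real.exp (-t) = 1 := by rw [← Real.exp_add]; simp
  have h4 : (0:ℝ) < Real.exp (-t) := Real.exp_pos _
  have h5 : (0:ℝ) < Real.exp t := Real.exp_pos _
  rw [Real.sinh_eq]
  nlinarith

lemma II_aux {f : ℝ → ℝ} {y C : ℝ} (hy : 0 ≤ y) (hm : Measurable f)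
    (hb : ∀ t ∈ Set.Ioc (0:ℝ) y, |f t| ≤ C) :
    IntervalIntegrable f MeasureTheory.volume 0 y := by
  rw [intervalIntegrable_iff_integrableOn_Ioc_of_le hy]
  refine MeasureTheory.Integrable.mono' (g := fun _ => C)
    (MeasureTheory.integrableOn_const measure_Ioc_lt_top.ne)
    hm.aestronglyMeasurable.restrict ?_
  filter_upwards [MeasureTheory.ae_restrict_mem measurableSet_Ioc] with t ht
  simpa using hb t ht

lemma II_sinh {y : ℝ} (hy : 0 ≤ y) :
    IntervalIntegrable (fun t => Real.sinh t / t) MeasureTheory.volume 0 y := by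
  refine II_aux (C := Real.exp y) hy (Real.measurable_sinh.div measurable_id) fun t ht => ?_
  have h0 : (0:ℝ) < t := ht.1
  have h2 : Real.sinh t ≤ t * Real.exp y := by
    refine le_trans (sinh_le_mul_exp h0.le) ?_
    have := Real.exp_le_exp.2 ht.2
    nlinarith
  have h1 : 0 ≤ Real.sinh t := Real.sinh_nonneg_iff.2 h0.le
  rw [abs_of_nonneg (div_nonneg h1 h0.le), div_le_iff₀ h0]
  nlinarith

lemma II_cosh {y : ℝ} (hy : 0 ≤ y) :
    IntervalIntegrable (fun t => (1 - Real.cosh t) / t) MeasureTheory.volume 0 y := by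
  refine II_aux (C := Real.exp y) hy
    ((measurable_const.sub Real.measurable_cosh).div measurable_id) fun t ht => ?_
  have h0 : (0:ℝ) < t := ht.1
  have hc1 : 1 ≤ Real.cosh t := Real.one_le_cosh t
  have hcs : Real.cosh t - Real.sinh t = Real.exp (-t) := Real.cosh_sub_sinh t
  have he1 : Real.exp (-t) ≤ 1 := Real.exp_le_one_iff.2 (by linarith)
  have h2 : Real.sinh t ≤ t * Real.exp y := by
    refine le_trans (sinh_le_mul_exp h0.le) ?_
    have := Real.exp_le_exp.2 ht.2
    nlinarith
  rw [abs_div, abs_of_pos h0, abs_of_nonpos (by linarith), div_le_iff₀ h0]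
  nlinarith

lemma II_sin {y : ℝ} (hy : 0 ≤ y) :
    IntervalIntegrable (fun t => Real.sin t / t) MeasureTheory.volume 0 y := by
  refine II_aux (C := 1) hy (Real.measurable_sin.div measurable_id) fun t ht => ?_
  have h0 : (0:ℝ) < t := ht.1
  rw [abs_div, abs_of_pos h0, div_le_one h0]
  calc |Real.sin t| ≤ |t| := Real.abs_sin_le_abs
  _ = t := abs_of_pos h0

lemma II_cos {y : ℝ} (hy : 0 ≤ y) :
    IntervalIntegrable (fun t => (1 - Real.cos t) / t) MeasureTheory.volume 0 y := by
  refine II_aux (C := 2) hy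
    ((measurable_const.sub Real.measurable_cos).div measurable_id) fun t ht => ?_
  have h0 : (0:ℝ) < t := ht.1
  have hc1 : Real.cos t ≤ 1 := Real.cos_le_one t
  have hcn : -1 ≤ Real.cos t := Real.neg_one_le_cos t
  rw [abs_div, abs_of_nonneg (by linarith : (0:ℝ) ≤ 1 - Real.cos t), abs_of_pos h0,
    div_le_iff₀ h0]
  rcases le_or_gt 1 t with h1 | h1
  · linarith
  · have hpi := Real.pi_gt_three
    have hs : Real.sin t ≤ t := Real.sin_le h0.le
    have hs0 : 0 ≤ Real.sin t :=
      Real.sin_nonneg_of_nonneg_of_le_pi h0.le (by linarith)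
    have hcos0 : 0 ≤ Real.cos t :=
      Real.cos_nonneg_of_mem_Icc ⟨by linarith, by linarith⟩
    have hpyth := Real.sin_sq_add_cos_sq t
    nlinarith

lemma harmonic_cast (n : ℕ) :
    (harmonic n : ℝ) = ∑ j ∈ Finset.range n, (1:ℝ)/(j+1) := by
  induction n with
  | zero => simp
  | succ n ih =>
    rw [harmonic_succ, Finset.sum_range_succ, ← ih]
    push_cast
    ring

lemma harmonic_le_nat (n : ℕ) : (harmonic n : ℝ) ≤ n := by
  rw [harmonic_cast]
  refine le_trans (Finset.sum_le_sum (g := fun _ => (1:ℝ)) fun j _ => ?_) ?_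
  · rw [div_le_one (by positivity)]
    have : (0:ℝ) ≤ j := Nat.cast_nonneg j
    linarith
  · simp

lemma summable_aux (y : ℝ) :
    Summable (fun k : ℕ => y ^ (4*k+3) / (Nat.factorial (4*k+2) : ℝ)) := by
  have hinj : Function.Injective (fun k : ℕ => 4*k+2) := fun a b hab => by
    dsimp only at hab; omega
  have h := (Real.summable_pow_div_factorial y).comp_injective hinj
  refine (h.mul_left y).congr fun k => ?_
  simp only [Function.comp]
  rw [show 4*k+3 = (4*k+2)+1 by ring, pow_succ]
  ring

lemma summable_T {y : ℝ} (hy : 0 ≤ y) :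
    Summable (fun k : ℕ =>
      (harmonic (4*k+3) : ℝ) * (y ^ (4*k+3) / ((4*k+3).factorial : ℝ))) := by
  refine Summable.of_nonneg_of_le (fun k => ?_) (fun k => ?_) (summable_aux y)
  · have h0 : (0:ℝ) ≤ (harmonic (4*k+3) : ℝ) := by
      have := harmonic_pos (n := 4*k+3) (by omega)
      exact_mod_cast this.le
    positivity
  · have hfac : ((4*k+3).factorial : ℝ) = (4*k+3) * ((4*k+2).factorial : ℝ) := by
      rw [show 4*k+3 = (4*k+2)+1 by ring, Nat.factorial_succ]
      push_cast
      ring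
    have hH : (harmonic (4*k+3) : ℝ) ≤ (4*k+3 : ℝ) := by
      have := harmonic_le_nat (4*k+3)
      push_cast at this ⊢
      linarith
    have hyp : (0:ℝ) ≤ y ^ (4*k+3) := by positivity
    have hpos : (0:ℝ) < ((4*k+2).factorial : ℝ) := by
      exact_mod_cast Nat.factorial_pos _
    rw [hfac]
    calc (harmonic (4*k+3) : ℝ) * (y ^ (4*k+3) / ((4*(k:ℝ)+3) * ((4*k+2).factorial : ℝ)))
        = ((harmonic (4*k+3) : ℝ) / (4*(k:ℝ)+3)) * (y ^ (4*k+3) / ((4*k+2).factorial : ℝ)) := by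
          have hm : (4*(k:ℝ)+3) ≠ 0 := by positivity
          field_simp
      _ ≤ 1 * (y ^ (4*k+3) / ((4*k+2).factorial : ℝ)) := by
          refine mul_le_mul_of_nonneg_right ?_ (by positivity)
          rw [div_le_one (by positivity)]
          exact hH
      _ = y ^ (4*k+3) / ((4*k+2).factorial : ℝ) := one_mul _

lemma T0_eq {y : ℝ} (hy : 0 < y) :
    ∑' k : ℕ, (harmonic (4*k+3) : ℝ) * (y ^ (4*k+3) / ((4*k+3).factorial : ℝ)) =
      (Real.sinh y * (∫ t in (0:ℝ)..y, (1 - Real.cosh t)/t)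
       + Real.cosh y * (∫ t in (0:ℝ)..y, Real.sinh t / t)
       - Real.sin y * (∫ t in (0:ℝ)..y, (1 - Real.cos t)/t)
       - Real.cos y * (∫ t in (0:ℝ)..y, Real.sin t / t)) / 2 := by
  classical
  set s : ℝ → ℝ := fun w => (Real.sinh w - Real.sin w) / 2 with hs
  set F : ℕ → ℝ → ℝ := fun k t =>
    (y ^ (4*k+3) / ((4*k+3).factorial : ℝ)) * ∑ j ∈ Finset.range (4*k+3), t ^ j with hF
  set μ : MeasureTheory.Measure ℝ := MeasureTheory.volume.restrict (Set.Ioo 0 1) with hμ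
  have hcont : ∀ k, Continuous (F k) := fun k =>
    continuous_const.mul (continuous_finset_sum _ fun j _ => continuous_pow j)
  have hFint : ∀ k, MeasureTheory.Integrable (F k) μ := by
    intro k
    rw [hμ]
    exact ((hcont k).integrableOn_Ioc (μ := MeasureTheory.volume)
      (a := 0) (b := 1)).mono_set Set.Ioo_subset_Ioc_self
  have hFI : ∀ k, ∫ t, F k t ∂μ =
      (y ^ (4*k+3) / ((4*k+3).factorial : ℝ)) * (harmonic (4*k+3) : ℝ) := by
    intro k
    rw [hμ, ← MeasureTheory.integral_Ioc_eq_integral_Ioo,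
      ← intervalIntegral.integral_of_le zero_le_one, hF]
    rw [intervalIntegral.integral_const_mul]
    congr 1
    rw [intervalIntegral.integral_finset_sum
      (fun j _ => (continuous_pow j).intervalIntegrable 0 1)]
    rw [harmonic_cast]
    refine Finset.sum_congr rfl fun j _ => ?_
    rw [integral_pow]
    norm_num
  have hnonneg : ∀ k, ∀ t ∈ Set.Ioo (0:ℝ) 1, 0 ≤ F k t := by
    intro k t ht
    have : (0:ℝ) ≤ ∑ j ∈ Finset.range (4*k+3), t ^ j :=
      Finset.sum_nonneg fun j _ => pow_nonneg ht.1.le j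
    have hc : (0:ℝ) ≤ y ^ (4*k+3) / ((4*k+3).factorial : ℝ) := by positivity
    exact mul_nonneg hc this
  have hnorm : ∀ k, ∫ t, ‖F k t‖ ∂μ = ∫ t, F k t ∂μ := by
    intro k
    refine MeasureTheory.integral_congr_ae ?_
    rw [hμ]
    filter_upwards [MeasureTheory.ae_restrict_mem measurableSet_Ioo] with t ht
    rw [Real.norm_eq_abs, abs_of_nonneg (hnonneg k t ht)]
  have hFsum : Summable fun k => ∫ t, ‖F k t‖ ∂μ := by
    refine Summable.of_nonneg_of_le
      (fun k => MeasureTheory.integral_nonneg fun t => norm_nonneg _)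
      (fun k => ?_) (summable_aux y)
    rw [hnorm k, hFI k]
    have hfac : ((4*k+3).factorial : ℝ) = (4*(k:ℝ)+3) * ((4*k+2).factorial : ℝ) := by
      rw [show 4*k+3 = (4*k+2)+1 by ring, Nat.factorial_succ]
      push_cast
      ring
    have hH : (harmonic (4*k+3) : ℝ) ≤ (4*(k:ℝ)+3 : ℝ) := by
      have := harmonic_le_nat (4*k+3)
      push_cast at this ⊢
      linarith
    have hHpos : (0:ℝ) ≤ (harmonic (4*k+3) : ℝ) := by
      have := harmonic_pos (n := 4*k+3) (by omega)
      exact_mod_cast this.le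
    have hpos : (0:ℝ) < ((4*k+2).factorial : ℝ) := by exact_mod_cast Nat.factorial_pos _
    have hm : (0:ℝ) < 4*(k:ℝ)+3 := by positivity
    rw [hfac]
    calc y ^ (4*k+3) / ((4*(k:ℝ)+3) * ((4*k+2).factorial : ℝ)) * (harmonic (4*k+3) : ℝ)
        = ((harmonic (4*k+3) : ℝ) / (4*(k:ℝ)+3)) * (y ^ (4*k+3) / ((4*k+2).factorial : ℝ)) := by
          field_simp
      _ ≤ 1 * (y ^ (4*k+3) / ((4*k+2).factorial : ℝ)) := by
          refine mul_le_mul_of_nonneg_right ?_ (by positivity)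
          rw [div_le_one hm]
          exact hH
      _ = y ^ (4*k+3) / ((4*k+2).factorial : ℝ) := one_mul _
  -- swap sum and integral
  have hswap := MeasureTheory.integral_tsum_of_summable_integral_norm hFint hFsum
  have hLHS : ∑' k : ℕ, (harmonic (4*k+3) : ℝ) * (y ^ (4*k+3) / ((4*k+3).factorial : ℝ)) =
      ∫ t, (∑' k, F k t) ∂μ := by
    rw [← hswap]
    exact tsum_congr fun k => by rw [hFI k, mul_comm]
  rw [hLHS]
  -- pointwise evaluation of the inner sum
  have hpt : ∀ t ∈ Set.Ioo (0:ℝ) 1, (∑' k, F k t) = (s y - s (t*y)) / (1-t) := by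
    intro t ht
    have ht1 : t ≠ 1 := ne_of_lt ht.2
    have ha := hasSum_quarter y
    have hb := hasSum_quarter (t*y)
    have hcomb := (ha.sub hb).div_const (1-t)
    rw [← hcomb.tsum_eq]
    refine tsum_congr fun k => ?_
    simp only [hF]
    have hgeom : ∑ j ∈ Finset.range (4*k+3), t ^ j = (1 - t^(4*k+3)) / (1-t) := by
      rw [geom_sum_eq ht1]
      rw [div_eq_div_iff (by intro h; apply ht1; linarith) (by intro h; apply ht1; linarith)]
      ring
    rw [hgeom, mul_pow]
    field_simp
  have hμpt : ∫ t, (∑' k, F k t) ∂μ = ∫ t in (0:ℝ)..1, (s y - s (t*y)) / (1-t) := by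
    rw [intervalIntegral.integral_of_le zero_le_one,
      MeasureTheory.integral_Ioc_eq_integral_Ioo, hμ]
    exact MeasureTheory.setIntegral_congr_fun measurableSet_Ioo hpt
  rw [hμpt]
  -- substitution
  set f : ℝ → ℝ := fun v => (s y - s (y - v)) * y / v with hf
  have hsub1 : (∫ t in (0:ℝ)..1, (s y - s (t*y)) / (1-t)) =
      ∫ u in (0:ℝ)..1, f (u*y) := by
    have := intervalIntegral.integral_comp_sub_left
      (a := (0:ℝ)) (b := 1) (fun t => (s y - s (t*y)) / (1-t)) 1
    norm_num at this
    rw [← this]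
    refine intervalIntegral.integral_congr fun u hu => ?_
    rcases eq_or_ne u 0 with rfl | hu0
    · simp [hf]
    · simp only [hf]
      have harg : (1-u)*y = y - u*y := by ring
      have : s ((1-u)*y) = s (y - u*y) := by rw [harg]
      rw [this]
      have huy : u*y ≠ 0 := mul_ne_zero hu0 hy.ne'
      field_simp
  rw [hsub1]
  have hsub2 : (∫ u in (0:ℝ)..1, f (u*y)) = y⁻¹ * ∫ v in (0:ℝ)..y, f v := by
    have h := intervalIntegral.integral_comp_mul_right f (a := 0) (b := 1) hy.ne'
    rw [h]
    norm_num
  rw [hsub2]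
  -- split the integrand
  have hsplit : (f : ℝ → ℝ) = fun v => y/2 * (Real.sinh y * ((1 - Real.cosh v)/v)
      + Real.cosh y * (Real.sinh v / v)
      - Real.sin y * ((1 - Real.cos v)/v)
      - Real.cos y * (Real.sin v / v)) := by
    funext v
    rcases eq_or_ne v 0 with rfl | hv
    · simp [hf, hs]
    · rw [hf, hs]
      simp only [Real.sinh_sub, Real.sin_sub]
      field_simp
      ring
  rw [hsplit]
  have e1 : IntervalIntegrable (fun v => Real.sinh y * ((1 - Real.cosh v)/v))
      MeasureTheory.volume 0 y := (II_cosh hy.le).const_mul _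
  have e2 : IntervalIntegrable (fun v => Real.cosh y * (Real.sinh v / v))
      MeasureTheory.volume 0 y := (II_sinh hy.le).const_mul _
  have e3 : IntervalIntegrable (fun v => Real.sin y * ((1 - Real.cos v)/v))
      MeasureTheory.volume 0 y := (II_cos hy.le).const_mul _
  have e4 : IntervalIntegrable (fun v => Real.cos y * (Real.sin v / v))
      MeasureTheory.volume 0 y := (II_sin hy.le).const_mul _
  rw [intervalIntegral.integral_const_mul]
  rw [intervalIntegral.integral_sub ((e1.add e2).sub e3) e4,
    intervalIntegral.integral_sub (e1.add e2) e3,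
    intervalIntegral.integral_add e1 e2,
    intervalIntegral.integral_const_mul, intervalIntegral.integral_const_mul,
    intervalIntegral.integral_const_mul, intervalIntegral.integral_const_mul]
  field_simp

/-- **Value (2.11)**: for every real `x > 0`,
`−∑_{k=1}^∞ ψ(4k) x^k / Γ(4k) = (x^{1/4}/8) { 4 sinh(x^{1/4}) Chi(x^{1/4})`
`+ sin(x^{1/4})[ln x − 4 Ci(x^{1/4})] − 4 cosh(x^{1/4}) Shi(x^{1/4})`
`+ 4 cos(x^{1/4}) Si(x^{1/4}) − sinh(x^{1/4}) ln x }`. -/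
theorem integral_mittagLeffler_alpha_deriv_four_zero (x : ℝ) (hx : 0 < x) :
    -∑' k : ℕ, digamma (4 * ((k : ℝ) + 1)) * x ^ (k + 1) / Real.Gamma (4 * ((k : ℝ) + 1)) =
      x ^ ((1 : ℝ) / 4) / 8 *
        (4 * Real.sinh (x ^ ((1 : ℝ) / 4)) * Chi (x ^ ((1 : ℝ) / 4)) +
          Real.sin (x ^ ((1 : ℝ) / 4)) * (Real.log x - 4 * Ci (x ^ ((1 : ℝ) / 4))) -
          4 * Real.cosh (x ^ ((1 : ℝ) / 4)) * Shi (x ^ ((1 : ℝ) / 4)) +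
          4 * Real.cos (x ^ ((1 : ℝ) / 4)) * Si (x ^ ((1 : ℝ) / 4)) -
          Real.sinh (x ^ ((1 : ℝ) / 4)) * Real.log x) := by
  set γ := Real.eulerMascheroniConstant with hγ
  set y := x ^ ((1:ℝ)/4) with hydef
  have hy : 0 < y := Real.rpow_pos_of_pos hx _
  have hyx : y ^ (4:ℕ) = x := by
    rw [hydef, ← Real.rpow_natCast (x ^ ((1:ℝ)/4)) 4, ← Real.rpow_mul hx.le]
    norm_num
  have hlog : Real.log x = 4 * Real.log y := by
    rw [hydef, Real.log_rpow hx]; ring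
  have hterm : ∀ k : ℕ, digamma (4*((k:ℝ)+1)) * x ^ (k+1) / Real.Gamma (4*((k:ℝ)+1)) =
      (-γ * y) * (y^(4*k+3)/((4*k+3).factorial : ℝ))
      + y * ((harmonic (4*k+3) : ℝ) * (y^(4*k+3)/((4*k+3).factorial : ℝ))) := by
    intro k
    have hcast : (4*((k:ℝ)+1)) = ((4*k+3 : ℕ) : ℝ) + 1 := by push_cast; ring
    have hx1 : x ^ (k+1) = y ^ (4*k+3) * y := by
      rw [← hyx, ← pow_mul, show 4*(k+1) = (4*k+3)+1 by ring, pow_succ]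
    have hf : ((4*k+3).factorial : ℝ) ≠ 0 := Nat.cast_ne_zero.2 (Nat.factorial_ne_zero _)
    rw [hcast]
    unfold digamma
    rw [Real.deriv_Gamma_nat, Real.Gamma_nat_eq_factorial, hx1,
      mul_div_cancel_left₀ _ hf]
    ring
  rw [tsum_congr hterm]
  have hA : HasSum (fun k : ℕ => (-γ * y) * (y^(4*k+3)/((4*k+3).factorial : ℝ)))
      ((-γ * y) * ((Real.sinh y - Real.sin y)/2)) := (hasSum_quarter y).mul_left _
  have hB : Summable (fun k : ℕ =>
      (harmonic (4*k+3):ℝ) * (y^(4*k+3)/((4*k+3).factorial:ℝ))) := summable_T hy.le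
  rw [Summable.tsum_add hA.summable (hB.mul_left y), hA.tsum_eq, tsum_mul_left, T0_eq hy]
  simp only [Shi, Si, Chi, Ci]
  rw [hlog]
  ring
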